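/- Prékopa–Leindler inequality: let a, b > 0 with a + b = 1 and u, v, w nonnegative measurable functions on ℝ^N such that u(x)^a v(y)^b ≤ w(ax + by) for all x, y. Then (∫u)^a (∫v)^b ≤ ∫w. -/

import Mathlib

open MeasureTheory Set
open scoped ENNReal NNReal Pointwise

noncomputable section

namespace PLAux

/-! ### Generic `ℝ≥0∞` facts -/

lemma rpow_iSup_le {f : ℕ → ℝ≥0∞} {a : ℝ} (ha : 0 < a) :
    (⨆ n, f n) ^ a ≤ ⨆ n, f n ^ a := by
  have h : ∀ n, f n ≤ (⨆ n, f n ^ a) ^ (1 / a) := by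
    intro n
    have h1 : f n = (f n ^ a) ^ (1 / a) := by
      rw [← ENNReal.rpow_mul, mul_one_div, div_self ha.ne', ENNReal.rpow_one]
    rw [h1]
    exact ENNReal.rpow_le_rpow (le_iSup (fun n => f n ^ a) n) (by positivity)
  calc (⨆ n, f n) ^ a ≤ ((⨆ n, f n ^ a) ^ (1 / a)) ^ a :=
        ENNReal.rpow_le_rpow (iSup_le h) ha.le
    _ = ⨆ n, f n ^ a := by
        rw [← ENNReal.rpow_mul, one_div_mul_cancel ha.ne', ENNReal.rpow_one]

lemma gm_le_am {a b : ℝ} (ha : 0 < a) (hb : 0 < b) (hab : a + b = 1) (X Y : ℝ≥0∞) :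
    X ^ a * Y ^ b ≤ ENNReal.ofReal a * X + ENNReal.ofReal b * Y := by
  rcases eq_or_ne X ⊤ with rfl | hX
  · rcases eq_or_ne Y 0 with rfl | hY
    · simp [ENNReal.zero_rpow_of_pos hb]
    · have h1 : ENNReal.ofReal a * ⊤ = ⊤ := by
        rw [ENNReal.mul_top]
        simp [ENNReal.ofReal_eq_zero, not_le.mpr ha]
      rw [h1]
      simp
  rcases eq_or_ne Y ⊤ with rfl | hY
  · rcases eq_or_ne X 0 with rfl | hX0
    · simp [ENNReal.zero_rpow_of_pos ha]
    · have h1 : ENNReal.ofReal b * ⊤ = ⊤ :=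
        ENNReal.mul_top (ENNReal.ofReal_pos.mpr hb).ne' 
      rw [h1]
      simp
  · lift X to ℝ≥0 using hX
    lift Y to ℝ≥0 using hY
    have key := NNReal.geom_mean_le_arith_mean2_weighted a.toNNReal b.toNNReal X Y ?_
    · have ha' : ((a.toNNReal : ℝ)) = a := Real.coe_toNNReal a ha.le
      have hb' : ((b.toNNReal : ℝ)) = b := Real.coe_toNNReal b hb.le
      rw [ha', hb'] at key
      calc (X : ℝ≥0∞) ^ a * (Y : ℝ≥0∞) ^ b
          = ((X ^ a * Y ^ b : ℝ≥0) : ℝ≥0∞) := by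
            rw [ENNReal.coe_mul, ← ENNReal.coe_rpow_of_nonneg X ha.le,
              ← ENNReal.coe_rpow_of_nonneg Y hb.le]
        _ ≤ ((a.toNNReal * X + b.toNNReal * Y : ℝ≥0) : ℝ≥0∞) := by
            exact_mod_cast key
        _ = ENNReal.ofReal a * X + ENNReal.ofReal b * Y := by
            rw [ENNReal.coe_add, ENNReal.coe_mul, ENNReal.coe_mul,
              ENNReal.ofReal, ENNReal.ofReal]
    · rw [← Real.toNNReal_add ha.le hb.le, hab, Real.toNNReal_one]

/-! ### One-dimensional Brunn–Minkowski -/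

lemma compact_sumset {K L : Set ℝ} (hK : IsCompact K) (hL : IsCompact L)
    (hKne : K.Nonempty) (hLne : L.Nonempty) :
    volume K + volume L ≤ volume (K + L) := by
  set k := sSup K with hk_def
  set l := sInf L with hl_def
  have hk : k ∈ K := hK.sSup_mem hKne
  have hl : l ∈ L := hL.sInf_mem hLne
  set P : Set ℝ := (· + l) '' K with hP_def
  set Q : Set ℝ := (k + ·) '' L with hQ_def
  have hPvol : volume P = volume K := by
    rw [hP_def, Set.image_add_right, measure_preimage_add_right]
  have hQvol : volume Q = volume L := by
    rw [hQ_def, Set.image_add_left, measure_preimage_add]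
  have hQmeas : MeasurableSet Q := by
    rw [hQ_def, Set.image_add_left]
    exact hL.isClosed.measurableSet.preimage (measurable_const_add _)
  have hsub : P ∪ Q ⊆ K + L := by
    rintro x (⟨y, hy, rfl⟩ | ⟨y, hy, rfl⟩)
    · exact add_mem_add hy hl
    · exact add_mem_add hk hy
  have hcap : P ∩ Q ⊆ {k + l} := by
    rintro x ⟨⟨y, hy, rfl⟩, ⟨z, hz, hzx⟩⟩
    have h1 : y + l ≤ k + l := add_le_add_left (le_csSup hK.bddAbove hy) l
    have h2 : k + l ≤ y + l :=
      calc k + l ≤ k + z := add_le_add_right (csInf_le hL.bddBelow hz) k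
        _ = y + l := hzx
    exact Set.mem_singleton_iff.mpr (le_antisymm h1 h2)
  calc volume K + volume L = volume P + volume Q := by rw [hPvol, hQvol]
    _ = volume (P ∪ Q) + volume (P ∩ Q) := (measure_union_add_inter P hQmeas).symm
    _ ≤ volume (K + L) + volume ({k + l} : Set ℝ) :=
        add_le_add (measure_mono hsub) (measure_mono hcap)
    _ = volume (K + L) := by rw [Real.volume_singleton, add_zero]

lemma sumset_measure {A B : Set ℝ} (hA : MeasurableSet A) (hB : MeasurableSet B)
    (hAne : A.Nonempty) (hBne : B.Nonempty) {S : Set ℝ} (hS : A + B ⊆ S) :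
    volume A + volume B ≤ volume S := by
  have key : ∀ K : Set ℝ, K ⊆ A → IsCompact K → ∀ L : Set ℝ, L ⊆ B → IsCompact L →
      volume K + volume L ≤ volume S := by
    intro K hKA hKc L hLB hLc
    rcases K.eq_empty_or_nonempty with rfl | hKne
    · obtain ⟨x, hx⟩ := hAne
      have h1 : (x + ·) '' L ⊆ S := by
        rintro _ ⟨y, hy, rfl⟩
        exact hS (add_mem_add hx (hLB hy))
      have h2 : volume L = volume ((x + ·) '' L) := by
        rw [Set.image_add_left, measure_preimage_add]
      rw [measure_empty, zero_add, h2]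
      exact measure_mono h1
    rcases L.eq_empty_or_nonempty with rfl | hLne
    · obtain ⟨y, hy⟩ := hBne
      have h1 : (· + y) '' K ⊆ S := by
        rintro _ ⟨x, hx, rfl⟩
        exact hS (add_mem_add (hKA hx) hy)
      have h2 : volume K = volume ((· + y) '' K) := by
        rw [Set.image_add_right, measure_preimage_add_right]
      rw [measure_empty, add_zero, h2]
      exact measure_mono h1
    · exact (compact_sumset hKc hLc hKne hLne).trans
        (measure_mono ((Set.add_subset_add hKA hLB).trans hS))
  classical
  have hite : ∀ (C : Set ℝ) (D : Set ℝ),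
      (⨆ (_ : C ⊆ D) (_ : IsCompact C), volume C)
        = volume (if C ⊆ D ∧ IsCompact C then C else ∅) := by
    intro C D
    by_cases h : C ⊆ D ∧ IsCompact C
    · rw [if_pos h, iSup_pos h.1, iSup_pos h.2]
    · rw [if_neg h]
      refine le_antisymm ?_ (by simp)
      refine iSup_le fun h1 => iSup_le fun h2 => absurd ⟨h1, h2⟩ h
  rw [hA.measure_eq_iSup_isCompact, hB.measure_eq_iSup_isCompact]
  refine ENNReal.iSup_add_iSup_le fun K L => ?_
  rw [hite K A, hite L B]
  have hK' : (if K ⊆ A ∧ IsCompact K then K else ∅) ⊆ A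
      ∧ IsCompact (if K ⊆ A ∧ IsCompact K then K else ∅) := by
    split_ifs with h
    · exact ⟨h.1, h.2⟩
    · exact ⟨empty_subset _, isCompact_empty⟩
  have hL' : (if L ⊆ B ∧ IsCompact L then L else ∅) ⊆ B
      ∧ IsCompact (if L ⊆ B ∧ IsCompact L then L else ∅) := by
    split_ifs with h
    · exact ⟨h.1, h.2⟩
    · exact ⟨empty_subset _, isCompact_empty⟩
  exact key _ hK'.1 hK'.2 _ hL'.1 hL'.2

lemma smul_sumset_measure {a b : ℝ} (ha : 0 < a) (hb : 0 < b)
    {A B : Set ℝ} (hA : MeasurableSet A) (hB : MeasurableSet B)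
    (hAne : A.Nonempty) (hBne : B.Nonempty) {S : Set ℝ} (hS : a • A + b • B ⊆ S) :
    ENNReal.ofReal a * volume A + ENNReal.ofReal b * volume B ≤ volume S := by
  have hsm : ∀ (c : ℝ), 0 < c → ∀ C : Set ℝ, MeasurableSet C →
      MeasurableSet (c • C) ∧ volume (c • C) = ENNReal.ofReal c * volume C := by
    intro c hc C hC
    constructor
    · have h1 : c • C = (fun x : ℝ => c⁻¹ * x) ⁻¹' C := by
        ext x
        rw [mem_smul_set_iff_inv_smul_mem₀ hc.ne', smul_eq_mul]
        rfl
      rw [h1]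
      exact hC.preimage (measurable_const_mul _)
    · rw [Measure.addHaar_smul]
      simp [abs_of_pos hc]
  obtain ⟨hmA, hvA⟩ := hsm a ha A hA
  obtain ⟨hmB, hvB⟩ := hsm b hb B hB
  rw [← hvA, ← hvB]
  exact sumset_measure hmA hmB (hAne.smul_set) (hBne.smul_set) hS

/-! ### Substitution in set lintegrals -/

lemma lintegral_comp_mul_left_Ioo {c : ℝ} (hc : 0 < c) {g : ℝ → ℝ≥0∞}
    (hg : Measurable g) (d : ℝ) :
    ∫⁻ s in Ioo 0 (c * d), g s = ENNReal.ofReal c * ∫⁻ t in Ioo 0 d, g (c * t) := by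
  have hpre : (c * ·) ⁻¹' (Ioo 0 (c * d)) = Ioo 0 d := by
    ext x
    simp only [mem_preimage, mem_Ioo]
    constructor
    · rintro ⟨h1, h2⟩
      refine ⟨?_, (mul_lt_mul_iff_right₀ hc).mp h2⟩
      nlinarith
    · rintro ⟨h1, h2⟩
      exact ⟨mul_pos hc h1, (mul_lt_mul_iff_right₀ hc).mpr h2⟩
  have hmap : Measure.map (c * ·) (volume.restrict (Ioo 0 d))
      = ENNReal.ofReal c⁻¹ • volume.restrict (Ioo 0 (c * d)) := by
    rw [← hpre, ← Measure.restrict_map (measurable_const_mul c) measurableSet_Ioo,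
      Real.map_volume_mul_left hc.ne']
    rw [Measure.restrict_smul]
    congr 1
    rw [abs_of_pos (inv_pos.mpr hc)]
  have h1 : ∫⁻ t in Ioo 0 d, g (c * t)
      = ∫⁻ s, g s ∂(Measure.map (c * ·) (volume.restrict (Ioo 0 d))) :=
    (lintegral_map hg (measurable_const_mul c)).symm
  rw [h1, hmap, lintegral_smul_measure, smul_eq_mul, ← mul_assoc, ← ENNReal.ofReal_mul hc.le,
    mul_inv_cancel₀ hc.ne', ENNReal.ofReal_one, one_mul]

/-! ### The one-dimensional Prékopa–Leindler inequality (for bounded functions) -/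

lemma dim1 {a b : ℝ} (ha : 0 < a) (hb : 0 < b) (hab : a + b = 1)
    (u v w : ℝ → ℝ) (hu0 : ∀ x, 0 ≤ u x) (hv0 : ∀ x, 0 ≤ v x) (hw0 : ∀ x, 0 ≤ w x)
    (hu : Measurable u) (hv : Measurable v) (hw : Measurable w)
    {n m : ℝ} (hun : ∀ x, u x ≤ n) (hvm : ∀ x, v x ≤ m)
    (hyp : ∀ x y : ℝ, u x ^ a * v y ^ b ≤ w (a * x + b * y)) :
    (∫⁻ x, ENNReal.ofReal (u x)) ^ a * (∫⁻ x, ENNReal.ofReal (v x)) ^ b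
      ≤ ∫⁻ x, ENNReal.ofReal (w x) := by
  set Iu := ∫⁻ x, ENNReal.ofReal (u x) with hIu_def
  set Iv := ∫⁻ x, ENNReal.ofReal (v x) with hIv_def
  set Iw := ∫⁻ x, ENNReal.ofReal (w x) with hIw_def
  by_cases hIu0 : Iu = 0
  · rw [hIu0, ENNReal.zero_rpow_of_pos ha, zero_mul]; exact zero_le
  by_cases hIv0 : Iv = 0
  · rw [hIv0, ENNReal.zero_rpow_of_pos hb, mul_zero]; exact zero_le
  have hvol : (volume : Measure ℝ) ≠ 0 := by
    intro h
    have h2 := congrArg (fun μ : Measure ℝ => μ (Ioo 0 1)) h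
    simp [Real.volume_Ioo] at h2
  set Mu := essSup (fun x => ENNReal.ofReal (u x)) volume with hMu_def
  set Mv := essSup (fun x => ENNReal.ofReal (v x)) volume with hMv_def
  have hMu0 : Mu ≠ 0 := by
    intro h
    rw [hMu_def, ENNReal.essSup_eq_zero_iff] at h
    exact hIu0 (by rw [hIu_def, lintegral_congr_ae h]; simp)
  have hMv0 : Mv ≠ 0 := by
    intro h
    rw [hMv_def, ENNReal.essSup_eq_zero_iff] at h
    exact hIv0 (by rw [hIv_def, lintegral_congr_ae h]; simp)
  have hMuT : Mu ≠ ⊤ := by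
    refine ne_top_of_le_ne_top (b := ENNReal.ofReal n) ENNReal.ofReal_ne_top ?_
    refine le_trans (essSup_mono_ae (ae_of_all _ fun x => ENNReal.ofReal_le_ofReal (hun x))) ?_
    rw [essSup_const _ hvol]
  have hMvT : Mv ≠ ⊤ := by
    refine ne_top_of_le_ne_top (b := ENNReal.ofReal m) ENNReal.ofReal_ne_top ?_
    refine le_trans (essSup_mono_ae (ae_of_all _ fun x => ENNReal.ofReal_le_ofReal (hvm x))) ?_
    rw [essSup_const _ hvol]
  set mu := Mu.toReal with hmu_def
  set mv := Mv.toReal with hmv_def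
  have hmu_pos : 0 < mu := ENNReal.toReal_pos hMu0 hMuT
  have hmv_pos : 0 < mv := ENNReal.toReal_pos hMv0 hMvT
  have hMu_eq : ENNReal.ofReal mu = Mu := ENNReal.ofReal_toReal hMuT
  have hMv_eq : ENNReal.ofReal mv = Mv := ENNReal.ofReal_toReal hMvT
  -- nonemptiness of level sets below the essential sup
  have hne : ∀ (f : ℝ → ℝ) (hf0 : ∀ x, 0 ≤ f x)
      (M : ℝ≥0∞) (hM : essSup (fun x => ENNReal.ofReal (f x)) volume = M)
      (hMT : M ≠ ⊤) (hm_pos : 0 < M.toReal),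
      ∀ t ∈ Ioo (0:ℝ) 1, {x | M.toReal * t < f x}.Nonempty := by
    intro f hf0 M hM hMT hm_pos t ht
    by_contra h
    rw [Set.not_nonempty_iff_eq_empty, Set.eq_empty_iff_forall_notMem] at h
    have hle : ∀ x, f x ≤ M.toReal * t := fun x => not_lt.mp (h x)
    have h2 : M ≤ ENNReal.ofReal (M.toReal * t) := by
      have h2' : essSup (fun x => ENNReal.ofReal (f x)) volume
          ≤ ENNReal.ofReal (M.toReal * t) := by
        refine le_trans (essSup_mono_ae (ae_of_all _ fun x =>
          ENNReal.ofReal_le_ofReal (hle x))) ?_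
        rw [essSup_const _ hvol]
      rwa [hM] at h2' 
    have h3 : ENNReal.ofReal (M.toReal * t) < M := by
      conv_rhs => rw [← ENNReal.ofReal_toReal hMT]
      exact (ENNReal.ofReal_lt_ofReal_iff hm_pos).mpr
        (mul_lt_of_lt_one_right hm_pos ht.2)
    exact absurd h2 (not_le.mpr h3)
  have hne_u := hne u hu0 Mu hMu_def.symm hMuT hmu_pos
  have hne_v := hne v hv0 Mv hMv_def.symm hMvT hmv_pos
  -- vanishing of tails
  have htail : ∀ (f : ℝ → ℝ) (hf : Measurable f)
      (M : ℝ≥0∞) (hM : essSup (fun x => ENNReal.ofReal (f x)) volume = M)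
      (hMT : M ≠ ⊤) (hm_pos : 0 < M.toReal),
      ∀ s : ℝ, s ∈ Ici M.toReal → volume {x | s < f x} = 0 := by
    intro f hf M hM hMT hm_pos s hs
    have h1 : {x | s < f x} ⊆
        {x | essSup (fun x => ENNReal.ofReal (f x)) volume < ENNReal.ofReal (f x)} := by
      intro x hx
      simp only [mem_setOf_eq] at *
      rw [hM]
      conv_lhs => rw [← ENNReal.ofReal_toReal hMT]
      exact (ENNReal.ofReal_lt_ofReal_iff (lt_of_lt_of_le hm_pos (le_trans hs hx.le))).mpr
        (lt_of_le_of_lt hs hx)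
    exact measure_mono_null h1 (meas_essSup_lt)
  have htail_u := htail u hu Mu hMu_def.symm hMuT hmu_pos
  have htail_v := htail v hv Mv hMv_def.symm hMvT hmv_pos
  -- measurability of tail functions
  have hgu : Measurable fun s : ℝ => volume {x | s < u x} :=
    Antitone.measurable fun s t hst => measure_mono fun x hx => lt_of_le_of_lt hst hx
  have hgv : Measurable fun s : ℝ => volume {x | s < v x} :=
    Antitone.measurable fun s t hst => measure_mono fun x hx => lt_of_le_of_lt hst hx
  have hgw : Measurable fun s : ℝ => volume {x | s ≤ w x} :=
    Antitone.measurable fun s t hst => measure_mono fun x hx => le_trans hst hx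
  -- layer cake
  have hlayer_u : Iu = ∫⁻ s in Ioi (0:ℝ), volume {x | s < u x} :=
    lintegral_eq_lintegral_meas_lt volume (ae_of_all _ hu0) hu.aemeasurable
  have hlayer_v : Iv = ∫⁻ s in Ioi (0:ℝ), volume {x | s < v x} :=
    lintegral_eq_lintegral_meas_lt volume (ae_of_all _ hv0) hv.aemeasurable
  have hlayer_w : Iw = ∫⁻ s in Ioi (0:ℝ), volume {x | s ≤ w x} :=
    lintegral_eq_lintegral_meas_le volume (ae_of_all _ hw0) hw.aemeasurable
  -- restrict the integration to a bounded interval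
  have hIoi : ∀ (g : ℝ → ℝ≥0∞) (c : ℝ) (hc : 0 < c),
      (∀ s : ℝ, s ∈ Ici c → g s = 0) →
      ∫⁻ s in Ioi (0:ℝ), g s = ∫⁻ s in Ioo (0:ℝ) c, g s := by
    intro g c hc hg0
    have hsplit : Ioi (0:ℝ) = Ioo 0 c ∪ Ici c := (Ioo_union_Ici_eq_Ioi hc).symm
    have hdisj : Disjoint (Ioo (0:ℝ) c) (Ici c) :=
      Set.disjoint_left.mpr fun x hx hx' => absurd hx.2 (not_lt.mpr hx')
    rw [hsplit, lintegral_union measurableSet_Ici hdisj,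
      setLIntegral_congr_fun_ae measurableSet_Ici (ae_of_all _ hg0), lintegral_zero, add_zero]
  -- substitution s = c * t
  set Ju := ∫⁻ t in Ioo (0:ℝ) 1, volume {x | mu * t < u x} with hJu_def
  set Jv := ∫⁻ t in Ioo (0:ℝ) 1, volume {x | mv * t < v x} with hJv_def
  have hJu : Iu = ENNReal.ofReal mu * Ju := by
    rw [hlayer_u, hIoi _ mu hmu_pos htail_u, hJu_def]
    have h := lintegral_comp_mul_left_Ioo hmu_pos hgu 1
    rwa [mul_one] at h
  have hJv : Iv = ENNReal.ofReal mv * Jv := by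
    rw [hlayer_v, hIoi _ mv hmv_pos htail_v, hJv_def]
    have h := lintegral_comp_mul_left_Ioo hmv_pos hgv 1
    rwa [mul_one] at h
  set c₀ : ℝ := mu ^ a * mv ^ b with hc0_def
  have hc0_pos : 0 < c₀ :=
    mul_pos (Real.rpow_pos_of_pos hmu_pos a) (Real.rpow_pos_of_pos hmv_pos b)
  have hw1 : ∫⁻ s in Ioo (0:ℝ) c₀, volume {x | s ≤ w x} ≤ Iw := by
    rw [hlayer_w]
    exact lintegral_mono_set Ioo_subset_Ioi_self
  have hw2 : ∫⁻ s in Ioo (0:ℝ) c₀, volume {x | s ≤ w x}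
      = ENNReal.ofReal c₀ * ∫⁻ t in Ioo (0:ℝ) 1, volume {x | c₀ * t ≤ w x} := by
    have h := lintegral_comp_mul_left_Ioo hc0_pos hgw 1
    rwa [mul_one] at h
  -- the key pointwise estimate from one-dimensional Brunn-Minkowski
  have hkey : ∀ t ∈ Ioo (0:ℝ) 1,
      ENNReal.ofReal a * volume {x | mu * t < u x}
        + ENNReal.ofReal b * volume {x | mv * t < v x}
        ≤ volume {x | c₀ * t ≤ w x} := by
    intro t ht
    refine smul_sumset_measure ha hb ?_ ?_ (hne_u t ht) (hne_v t ht) ?_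
    · exact measurableSet_lt measurable_const hu
    · exact measurableSet_lt measurable_const hv
    · intro z hz
      rw [Set.mem_add] at hz
      obtain ⟨p, hp, q, hq, rfl⟩ := hz
      rw [Set.mem_smul_set] at hp hq
      obtain ⟨x, hx, rfl⟩ := hp
      obtain ⟨y, hy, rfl⟩ := hq
      have hx' : mu * t < u x := hx
      have hy' : mv * t < v y := hy
      show c₀ * t ≤ w (a • x + b • y)
      rw [smul_eq_mul, smul_eq_mul]
      have h3 : t ^ a * t ^ b = t := by
        rw [← Real.rpow_add ht.1, hab, Real.rpow_one]
      have h2 : (mu * t) ^ a * (mv * t) ^ b = c₀ * t := by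
        rw [Real.mul_rpow hmu_pos.le ht.1.le, Real.mul_rpow hmv_pos.le ht.1.le, hc0_def]
        calc mu ^ a * t ^ a * (mv ^ b * t ^ b)
            = mu ^ a * mv ^ b * (t ^ a * t ^ b) := by ring
          _ = mu ^ a * mv ^ b * t := by rw [h3]
      have h1 : (mu * t) ^ a * (mv * t) ^ b ≤ u x ^ a * v y ^ b := by
        have e1 : (mu * t) ^ a ≤ u x ^ a :=
          Real.rpow_le_rpow (mul_nonneg hmu_pos.le ht.1.le) hx'.le ha.le
        have e2 : (mv * t) ^ b ≤ v y ^ b :=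
          Real.rpow_le_rpow (mul_nonneg hmv_pos.le ht.1.le) hy'.le hb.le
        exact mul_le_mul e1 e2
          (Real.rpow_nonneg (mul_nonneg hmv_pos.le ht.1.le) b)
          (Real.rpow_nonneg (hu0 x) a)
      calc c₀ * t = (mu * t) ^ a * (mv * t) ^ b := h2.symm
        _ ≤ u x ^ a * v y ^ b := h1
        _ ≤ w (a * x + b * y) := hyp x y
  -- integrate the key estimate
  have hGu : Measurable fun t : ℝ => volume {x | mu * t < u x} :=
    hgu.comp (measurable_const_mul mu)
  have hGv : Measurable fun t : ℝ => volume {x | mv * t < v x} :=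
    hgv.comp (measurable_const_mul mv)
  have hint : ∫⁻ t in Ioo (0:ℝ) 1,
      (ENNReal.ofReal a * volume {x | mu * t < u x}
        + ENNReal.ofReal b * volume {x | mv * t < v x})
      ≤ ∫⁻ t in Ioo (0:ℝ) 1, volume {x | c₀ * t ≤ w x} :=
    setLIntegral_mono (hgw.comp (measurable_const_mul c₀)) hkey
  have hsplit_int : ∫⁻ t in Ioo (0:ℝ) 1,
      (ENNReal.ofReal a * volume {x | mu * t < u x}
        + ENNReal.ofReal b * volume {x | mv * t < v x})
      = ENNReal.ofReal a * Ju + ENNReal.ofReal b * Jv := by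
    rw [lintegral_add_left (hGu.const_mul _), lintegral_const_mul _ hGu,
      lintegral_const_mul _ hGv]
  calc Iu ^ a * Iv ^ b
      = (ENNReal.ofReal mu * Ju) ^ a * (ENNReal.ofReal mv * Jv) ^ b := by rw [hJu, hJv]
    _ = ENNReal.ofReal mu ^ a * ENNReal.ofReal mv ^ b * (Ju ^ a * Jv ^ b) := by
        rw [ENNReal.mul_rpow_of_nonneg _ _ ha.le, ENNReal.mul_rpow_of_nonneg _ _ hb.le]
        ring
    _ = ENNReal.ofReal c₀ * (Ju ^ a * Jv ^ b) := by
        rw [hc0_def, ENNReal.ofReal_mul (Real.rpow_nonneg hmu_pos.le a),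
          ENNReal.ofReal_rpow_of_pos hmu_pos, ENNReal.ofReal_rpow_of_pos hmv_pos]
    _ ≤ ENNReal.ofReal c₀ * (ENNReal.ofReal a * Ju + ENNReal.ofReal b * Jv) :=
        mul_le_mul_right (gm_le_am ha hb hab Ju Jv) _
    _ ≤ ENNReal.ofReal c₀ * ∫⁻ t in Ioo (0:ℝ) 1, volume {x | c₀ * t ≤ w x} := by
        refine mul_le_mul_right ?_ _
        rw [← hsplit_int]
        exact hint
    _ = ∫⁻ s in Ioo (0:ℝ) c₀, volume {x | s ≤ w x} := hw2.symm
    _ ≤ Iw := hw1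

/-! ### The abstract Prékopa–Leindler property and its stability -/

/-- The Prékopa–Leindler property for a measure space with scalar multiplication. -/
def PLE (a b : ℝ) (α : Type*) [MeasureSpace α] [SMul ℝ α] [Add α] : Prop :=
  ∀ u v w : α → ℝ≥0∞, Measurable u → Measurable v → Measurable w →
    (∀ x y : α, u x ^ a * v y ^ b ≤ w (a • x + b • y)) →
    (∫⁻ x, u x) ^ a * (∫⁻ x, v x) ^ b ≤ ∫⁻ x, w x

lemma PLE.of_equiv {α β : Type*} [MeasureSpace α] [MeasureSpace β]
    [SMul ℝ α] [Add α] [SMul ℝ β] [Add β] {a b : ℝ}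
    (e : β ≃ᵐ α) (he : MeasurePreserving e volume volume)
    (hlin : ∀ x y : β, e (a • x + b • y) = a • e x + b • e y)
    (h : PLE a b α) : PLE a b β := by
  intro u v w hu hv hw hyp
  have hsymm : MeasurePreserving e.symm volume volume := he.symm e
  have hlin' : ∀ x y : α, e.symm (a • x + b • y) = a • e.symm x + b • e.symm y := by
    intro x y
    have h1 : a • x + b • y = e (a • e.symm x + b • e.symm y) := by
      rw [hlin, e.apply_symm_apply, e.apply_symm_apply]
    rw [h1, e.symm_apply_apply]
  have key := h (fun x => u (e.symm x)) (fun x => v (e.symm x)) (fun x => w (e.symm x))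
    (hu.comp e.symm.measurable) (hv.comp e.symm.measurable) (hw.comp e.symm.measurable)
    (fun x y => by
      simpa [hlin' x y] using hyp (e.symm x) (e.symm y))
  rwa [hsymm.lintegral_comp hu, hsymm.lintegral_comp hv, hsymm.lintegral_comp hw] at key

lemma PLE.prod {α β : Type*} [MeasureSpace α] [MeasureSpace β]
    [SigmaFinite (volume : Measure α)] [SigmaFinite (volume : Measure β)]
    [SMul ℝ α] [Add α] [SMul ℝ β] [Add β] {a b : ℝ}
    (hα : PLE a b α) (hβ : PLE a b β) : PLE a b (α × β) := by
  intro u v w hu hv hw hyp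
  set U : β → ℝ≥0∞ := fun t => ∫⁻ x, u (x, t) with hU_def
  set V : β → ℝ≥0∞ := fun t => ∫⁻ x, v (x, t) with hV_def
  set W : β → ℝ≥0∞ := fun t => ∫⁻ x, w (x, t) with hW_def
  have hU : Measurable U := Measurable.lintegral_prod_left (f := fun x t => u (x, t)) hu
  have hV : Measurable V := Measurable.lintegral_prod_left (f := fun x t => v (x, t)) hv
  have hW : Measurable W := Measurable.lintegral_prod_left (f := fun x t => w (x, t)) hw
  have hyp' : ∀ t₁ t₂ : β, U t₁ ^ a * V t₂ ^ b ≤ W (a • t₁ + b • t₂) := by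
    intro t₁ t₂
    refine hα (fun x => u (x, t₁)) (fun y => v (y, t₂)) (fun z => w (z, a • t₁ + b • t₂))
      (hu.comp (measurable_id.prodMk measurable_const))
      (hv.comp (measurable_id.prodMk measurable_const))
      (hw.comp (measurable_id.prodMk measurable_const)) ?_
    intro x y
    exact hyp (x, t₁) (y, t₂)
  have key := hβ U V W hU hV hW hyp'
  have heq : ∀ f : α × β → ℝ≥0∞, Measurable f →
      ∫⁻ z, f z = ∫⁻ t, ∫⁻ x, f (x, t) := by
    intro f hf
    rw [MeasureTheory.Measure.volume_eq_prod]
    exact lintegral_prod_symm f hf.aemeasurable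
  rwa [← heq u hu, ← heq v hv, ← heq w hw] at key

lemma PLE_real {a b : ℝ} (ha : 0 < a) (hb : 0 < b) (hab : a + b = 1) : PLE a b ℝ := by
  intro u v w hu hv hw hyp
  -- truncate and apply the real one-dimensional inequality
  have key : ∀ n m : ℕ,
      (∫⁻ x, u x ⊓ (n : ℝ≥0∞)) ^ a * (∫⁻ x, v x ⊓ (m : ℝ≥0∞)) ^ b ≤ ∫⁻ x, w x := by
    intro n m
    set c : ℝ≥0∞ := (n : ℝ≥0∞) ^ a * (m : ℝ≥0∞) ^ b with hc_def
    have hcT : c ≠ ⊤ := ENNReal.mul_ne_top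
      (ENNReal.rpow_ne_top_of_nonneg ha.le (ENNReal.natCast_ne_top n))
      (ENNReal.rpow_ne_top_of_nonneg hb.le (ENNReal.natCast_ne_top m))
    set u' : ℝ → ℝ := fun x => (u x ⊓ (n : ℝ≥0∞)).toReal with hu'_def
    set v' : ℝ → ℝ := fun x => (v x ⊓ (m : ℝ≥0∞)).toReal with hv'_def
    set w' : ℝ → ℝ := fun x => (w x ⊓ c).toReal with hw'_def
    have hunT : ∀ x, u x ⊓ (n : ℝ≥0∞) ≠ ⊤ :=
      fun x => ne_top_of_le_ne_top (ENNReal.natCast_ne_top n) inf_le_right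
    have hvmT : ∀ x, v x ⊓ (m : ℝ≥0∞) ≠ ⊤ :=
      fun x => ne_top_of_le_ne_top (ENNReal.natCast_ne_top m) inf_le_right
    have hwcT : ∀ x, w x ⊓ c ≠ ⊤ := fun x => ne_top_of_le_ne_top hcT inf_le_right
    have hou : ∀ x, ENNReal.ofReal (u' x) = u x ⊓ (n : ℝ≥0∞) :=
      fun x => ENNReal.ofReal_toReal (hunT x)
    have hov : ∀ x, ENNReal.ofReal (v' x) = v x ⊓ (m : ℝ≥0∞) :=
      fun x => ENNReal.ofReal_toReal (hvmT x)
    have how : ∀ x, ENNReal.ofReal (w' x) = w x ⊓ c :=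
      fun x => ENNReal.ofReal_toReal (hwcT x)
    have hyp' : ∀ x y : ℝ, u' x ^ a * v' y ^ b ≤ w' (a * x + b * y) := by
      intro x y
      have hE : (u x ⊓ (n : ℝ≥0∞)) ^ a * (v y ⊓ (m : ℝ≥0∞)) ^ b
          ≤ w (a * x + b * y) ⊓ c := by
        refine le_inf ?_ ?_
        · refine le_trans (mul_le_mul'
            (ENNReal.rpow_le_rpow inf_le_left ha.le)
            (ENNReal.rpow_le_rpow inf_le_left hb.le)) ?_
          have := hyp x y
          rwa [smul_eq_mul, smul_eq_mul] at this
        · rw [hc_def]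
          exact mul_le_mul'
            (ENNReal.rpow_le_rpow inf_le_right ha.le)
            (ENNReal.rpow_le_rpow inf_le_right hb.le)
      calc u' x ^ a * v' y ^ b
          = ((u x ⊓ (n : ℝ≥0∞)) ^ a * (v y ⊓ (m : ℝ≥0∞)) ^ b).toReal := by
            rw [ENNReal.toReal_mul, ← ENNReal.toReal_rpow, ← ENNReal.toReal_rpow]
        _ ≤ (w (a * x + b * y) ⊓ c).toReal :=
            ENNReal.toReal_mono (ne_top_of_le_ne_top hcT inf_le_right) hE
        _ = w' (a * x + b * y) := rfl
    have hmu' : Measurable u' := (hu.min measurable_const).ennreal_toReal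
    have hmv' : Measurable v' := (hv.min measurable_const).ennreal_toReal
    have hmw' : Measurable w' := (hw.min measurable_const).ennreal_toReal
    have h1 := PLAux.dim1 ha hb hab u' v' w'
      (fun x => ENNReal.toReal_nonneg) (fun x => ENNReal.toReal_nonneg)
      (fun x => ENNReal.toReal_nonneg) hmu' hmv' hmw'
      (n := (n : ℝ)) (m := (m : ℝ))
      (fun x => by
        rw [hu'_def]
        exact ENNReal.toReal_mono (ENNReal.natCast_ne_top n) inf_le_right |>.trans
          (by simp))
      (fun x => by
        rw [hv'_def]
        exact ENNReal.toReal_mono (ENNReal.natCast_ne_top m) inf_le_right |>.trans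
          (by simp))
      hyp'
    have h2 : (∫⁻ x, ENNReal.ofReal (u' x)) = ∫⁻ x, u x ⊓ (n : ℝ≥0∞) :=
      lintegral_congr fun x => hou x
    have h3 : (∫⁻ x, ENNReal.ofReal (v' x)) = ∫⁻ x, v x ⊓ (m : ℝ≥0∞) :=
      lintegral_congr fun x => hov x
    have h4 : (∫⁻ x, ENNReal.ofReal (w' x)) ≤ ∫⁻ x, w x := by
      refine lintegral_mono fun x => ?_
      rw [how x]
      exact inf_le_left
    rw [h2, h3] at h1
    exact h1.trans h4
  -- pass to the limit
  have hmono : ∀ (f : ℝ → ℝ≥0∞), Measurable f →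
      (∫⁻ x, f x) = ⨆ n : ℕ, ∫⁻ x, f x ⊓ (n : ℝ≥0∞) := by
    intro f hf
    rw [← lintegral_iSup (fun n => hf.min measurable_const)
      (fun i j hij => fun x => inf_le_inf_left _ (Nat.mono_cast hij))]
    refine lintegral_congr fun x => ?_
    rw [← inf_iSup_eq]
    simp [ENNReal.iSup_natCast]
  rw [hmono u hu, hmono v hv]
  calc (⨆ n : ℕ, ∫⁻ x, u x ⊓ (n : ℝ≥0∞)) ^ a * (⨆ m : ℕ, ∫⁻ x, v x ⊓ (m : ℝ≥0∞)) ^ b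
      ≤ (⨆ n : ℕ, (∫⁻ x, u x ⊓ (n : ℝ≥0∞)) ^ a)
        * ⨆ m : ℕ, (∫⁻ x, v x ⊓ (m : ℝ≥0∞)) ^ b :=
        mul_le_mul' (rpow_iSup_le ha) (rpow_iSup_le hb)
    _ ≤ ∫⁻ x, w x := by
        rw [ENNReal.iSup_mul]
        refine iSup_le fun n => ?_
        rw [ENNReal.mul_iSup]
        exact iSup_le fun m => key n m

lemma PLE_pi {a b : ℝ} (ha : 0 < a) (hb : 0 < b) (hab : a + b = 1) :
    ∀ N : ℕ, PLE a b (Fin N → ℝ) := by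
  intro N
  induction N with
  | zero =>
    intro u v w hu hv hw hyp
    have huniv : (volume : Measure (Fin 0 → ℝ)) = Measure.dirac 0 := by
      rw [volume_pi]
      exact (Measure.pi_of_empty _ 0)
    have hlint : ∀ f : (Fin 0 → ℝ) → ℝ≥0∞, Measurable f → (∫⁻ x, f x) = f 0 := by
      intro f hf
      rw [huniv, lintegral_dirac]
    rw [hlint u hu, hlint v hv, hlint w hw]
    have h0 : a • (0 : Fin 0 → ℝ) + b • (0 : Fin 0 → ℝ) = 0 := Subsingleton.elim _ _
    simpa [h0] using hyp 0 0
  | succ n ih =>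
    have hR : PLE a b ℝ := PLE_real ha hb hab
    have hprod : PLE a b (ℝ × (Fin n → ℝ)) := hR.prod ih
    refine PLE.of_equiv (MeasurableEquiv.piFinSuccAbove (fun _ => ℝ) 0)
      (volume_preserving_piFinSuccAbove (fun _ => ℝ) 0) ?_ hprod
    intro x y
    rfl

end PLAux

/-- Prékopa–Leindler inequality: if `a, b > 0`, `a + b = 1` and the nonnegative measurable
functions `u, v, w` on `ℝ^N` satisfy `u(x)^a v(y)^b ≤ w(ax + by)` for all `x, y`, then
`(∫u)^a (∫v)^b ≤ ∫w` (integrals with respect to Lebesgue measure). -/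
theorem prekopa_leindler {N : ℕ} (a b : ℝ) (ha : 0 < a) (hb : 0 < b) (hab : a + b = 1)
    (u v w : EuclideanSpace ℝ (Fin N) → ℝ)
    (hu0 : ∀ x, 0 ≤ u x) (hv0 : ∀ x, 0 ≤ v x) (hw0 : ∀ x, 0 ≤ w x)
    (hu : Measurable u) (hv : Measurable v) (hw : Measurable w)
    (hyp : ∀ x y : EuclideanSpace ℝ (Fin N), u x ^ a * v y ^ b ≤ w (a • x + b • y)) :
    (∫⁻ x, ENNReal.ofReal (u x)) ^ a * (∫⁻ x, ENNReal.ofReal (v x)) ^ b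
      ≤ ∫⁻ x, ENNReal.ofReal (w x) := by
  have hE : PLAux.PLE a b (EuclideanSpace ℝ (Fin N)) := by
    refine PLAux.PLE.of_equiv (MeasurableEquiv.toLp 2 (Fin N → ℝ)).symm
      (EuclideanSpace.volume_preserving_symm_measurableEquiv_toLp (Fin N)) ?_
      (PLAux.PLE_pi ha hb hab N)
    intro x y
    rfl
  refine hE (fun x => ENNReal.ofReal (u x)) (fun x => ENNReal.ofReal (v x))
    (fun x => ENNReal.ofReal (w x))
    (ENNReal.measurable_ofReal.comp hu) (ENNReal.measurable_ofReal.comp hv)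
    (ENNReal.measurable_ofReal.comp hw) ?_
  intro x y
  show ENNReal.ofReal (u x) ^ a * ENNReal.ofReal (v y) ^ b
    ≤ ENNReal.ofReal (w (a • x + b • y))
  rw [ENNReal.ofReal_rpow_of_nonneg (hu0 x) ha.le,
    ENNReal.ofReal_rpow_of_nonneg (hv0 y) hb.le,
    ← ENNReal.ofReal_mul (Real.rpow_nonneg (hu0 x) a)]
  exact ENNReal.ofReal_le_ofReal (hyp x y)
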